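/- Let p > 1 be a real number and let G be a complete 3-partite 3-uniform hypergraph with three nonempty vertex classes. Then λ^(p)(G) = (27 · |E(G)|)^{1 - 1/p} / 9. -/

import Mathlib

open Finset

/-- A 3-uniform hypergraph on vertex set `Fin n`, given by its edge set:
every edge is a 3-element subset. -/
def IsThreeGraph {n : ℕ} (E : Finset (Finset (Fin n))) : Prop :=
  ∀ e ∈ E, e.card = 3

/-- `G` is cancellative: there are no three distinct edges `A, B, C` with `B △ C ⊆ A`. -/
def Cancellative {n : ℕ} (E : Finset (Finset (Fin n))) : Prop :=
  ∀ A ∈ E, ∀ B ∈ E, ∀ C ∈ E, A ≠ B → A ≠ C → B ≠ C → ¬ (symmDiff B C ⊆ A)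

/-- The `p`-norm of a vector `x ∈ ℝ^n`. -/
noncomputable def pNorm {n : ℕ} (p : ℝ) (x : Fin n → ℝ) : ℝ :=
  (∑ i, |x i| ^ p) ^ (1 / p)

/-- The polynomial form of a 3-graph. -/
noncomputable def polyForm {n : ℕ} (E : Finset (Finset (Fin n))) (x : Fin n → ℝ) : ℝ :=
  3 * ∑ e ∈ E, ∏ i ∈ e, x i

/-- The `p`-spectral radius of a 3-graph: the maximum of the polynomial form over the
unit sphere of the `p`-norm. -/
noncomputable def specRad {n : ℕ} (p : ℝ) (E : Finset (Finset (Fin n))) : ℝ :=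
  sSup {r : ℝ | ∃ x : Fin n → ℝ, pNorm p x = 1 ∧ polyForm E x = r}

/-- The part (among the three parts of sizes ⌊n/3⌋, ⌊(n+1)/3⌋, ⌊(n+2)/3⌋) containing vertex `i`. -/
def part3 (n : ℕ) (i : Fin n) : Fin 3 :=
  if (i : ℕ) < n / 3 then 0 else if (i : ℕ) < n / 3 + (n + 1) / 3 then 1 else 2

/-- The complete 3-partite 3-graph `T_3(n)` with part sizes ⌊n/3⌋, ⌊(n+1)/3⌋, ⌊(n+2)/3⌋:
edges are the triples having exactly one vertex in each part. -/
def T3 (n : ℕ) : Finset (Finset (Fin n)) :=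
  Finset.univ.filter fun e => ∀ k : Fin 3, (e.filter fun i => part3 n i = k).card = 1

/-- `t_3(n)`, the number of edges of `T_3(n)`. -/
def t3 (n : ℕ) : ℕ := (n / 3) * ((n + 1) / 3) * ((n + 2) / 3)

/-- Two 3-graphs on `Fin n` are isomorphic. -/
def IsoTo {n : ℕ} (E₁ E₂ : Finset (Finset (Fin n))) : Prop :=
  ∃ σ : Fin n ≃ Fin n, ∀ e : Finset (Fin n), e ∈ E₁ ↔ e.map σ.toEmbedding ∈ E₂

/-- Two vertices are adjacent if some edge contains both. -/
def Adjacent {n : ℕ} (E : Finset (Finset (Fin n))) (u v : Fin n) : Prop :=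
  u ≠ v ∧ ∃ e ∈ E, u ∈ e ∧ v ∈ e

/-- The link of a vertex `v`: all 2-element sets `S` with `S ∪ {v} ∈ E`. -/
def link {n : ℕ} (E : Finset (Finset (Fin n))) (v : Fin n) : Finset (Finset (Fin n)) :=
  (E.filter fun e => v ∈ e).image fun e => e.erase v

/-- The degree of a vertex: the size of its link. -/
def degree {n : ℕ} (E : Finset (Finset (Fin n))) (v : Fin n) : ℕ := (link E v).card

/-- The transfer `T_v^u(G)`: delete all edges containing `v` and replace `v` for `u`
in all edges containing `u` but not `v`. -/
def transfer {n : ℕ} (E : Finset (Finset (Fin n))) (u v : Fin n) : Finset (Finset (Fin n)) :=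
  (E.filter fun e => v ∉ e) ∪
    ((E.filter fun e => u ∈ e ∧ v ∉ e).image fun e => insert v (e.erase u))

/-- A 3-graph is complete 3-partite: there is a partition of the vertices into three classes
such that the edges are exactly the triples with one vertex in each class. -/
def IsComplete3Partite {n : ℕ} (E : Finset (Finset (Fin n))) : Prop :=
  ∃ P : Fin n → Fin 3,
    ∀ e : Finset (Fin n), e ∈ E ↔ ∀ k : Fin 3, (e.filter fun i => P i = k).card = 1

/-- `G` has maximum `p`-spectral radius among all cancellative 3-graphs on `n` vertices. -/
def MaxSpectral {n : ℕ} (p : ℝ) (E : Finset (Finset (Fin n))) : Prop :=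
  IsThreeGraph E ∧ Cancellative E ∧
    ∀ E' : Finset (Finset (Fin n)), IsThreeGraph E' → Cancellative E' →
      specRad p E' ≤ specRad p E


lemma fin3_cases (c : Fin 3) : c = 0 ∨ c = 1 ∨ c = 2 := by omega

lemma triple_mem {n : ℕ} {E : Finset (Finset (Fin n))} {P : Fin n → Fin 3}
    (hpart : ∀ e : Finset (Fin n),
      e ∈ E ↔ ∀ k : Fin 3, (e.filter fun i => P i = k).card = 1)
    {i j k : Fin n} (hi : P i = 0) (hj : P j = 1) (hk : P k = 2) :
    ({i, j, k} : Finset (Fin n)) ∈ E := by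
  refine (hpart _).2 fun c => ?_
  rcases fin3_cases c with rfl | rfl | rfl
  · have : ({i, j, k} : Finset (Fin n)).filter (fun v => P v = 0) = {i} := by
      ext v
      simp only [Finset.mem_filter, Finset.mem_insert, Finset.mem_singleton]
      constructor
      · rintro ⟨rfl | rfl | rfl, h⟩ <;> simp_all
      · rintro rfl; exact ⟨Or.inl rfl, hi⟩
    rw [this]; simp
  · have : ({i, j, k} : Finset (Fin n)).filter (fun v => P v = 1) = {j} := by
      ext v
      simp only [Finset.mem_filter, Finset.mem_insert, Finset.mem_singleton]
      constructor
      · rintro ⟨rfl | rfl | rfl, h⟩ <;> simp_all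
      · rintro rfl; exact ⟨Or.inr (Or.inl rfl), hj⟩
    rw [this]; simp
  · have : ({i, j, k} : Finset (Fin n)).filter (fun v => P v = 2) = {k} := by
      ext v
      simp only [Finset.mem_filter, Finset.mem_insert, Finset.mem_singleton]
      constructor
      · rintro ⟨rfl | rfl | rfl, h⟩ <;> simp_all
      · rintro rfl; exact ⟨Or.inr (Or.inr rfl), hk⟩
    rw [this]; simp

lemma edge_struct {n : ℕ} {E : Finset (Finset (Fin n))} {P : Fin n → Fin 3}
    (hpart : ∀ e : Finset (Fin n),
      e ∈ E ↔ ∀ k : Fin 3, (e.filter fun i => P i = k).card = 1)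
    {e : Finset (Fin n)} (he : e ∈ E) :
    ∃ i j k : Fin n, P i = 0 ∧ P j = 1 ∧ P k = 2 ∧ e = {i, j, k} := by
  have h := (hpart e).1 he
  obtain ⟨i, hi⟩ := Finset.card_eq_one.1 (h 0)
  obtain ⟨j, hj⟩ := Finset.card_eq_one.1 (h 1)
  obtain ⟨k, hk⟩ := Finset.card_eq_one.1 (h 2)
  have hi' : i ∈ e ∧ P i = 0 := by
    have := hi ▸ Finset.mem_singleton_self i; simpa using Finset.mem_filter.1 this
  have hj' : j ∈ e ∧ P j = 1 := by
    have := hj ▸ Finset.mem_singleton_self j; simpa using Finset.mem_filter.1 this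
  have hk' : k ∈ e ∧ P k = 2 := by
    have := hk ▸ Finset.mem_singleton_self k; simpa using Finset.mem_filter.1 this
  refine ⟨i, j, k, hi'.2, hj'.2, hk'.2, ?_⟩
  ext v
  simp only [Finset.mem_insert, Finset.mem_singleton]
  constructor
  · intro hv
    rcases fin3_cases (P v) with h0 | h1 | h2
    · left
      have : v ∈ e.filter (fun i => P i = 0) := Finset.mem_filter.2 ⟨hv, h0⟩
      rw [hi] at this; simpa using this
    · right; left
      have : v ∈ e.filter (fun i => P i = 1) := Finset.mem_filter.2 ⟨hv, h1⟩
      rw [hj] at this; simpa using this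
    · right; right
      have : v ∈ e.filter (fun i => P i = 2) := Finset.mem_filter.2 ⟨hv, h2⟩
      rw [hk] at this; simpa using this
  · rintro (rfl | rfl | rfl)
    exacts [hi'.1, hj'.1, hk'.1]

lemma sum_prod_eq {n : ℕ} {E : Finset (Finset (Fin n))} {P : Fin n → Fin 3}
    (hpart : ∀ e : Finset (Fin n),
      e ∈ E ↔ ∀ k : Fin 3, (e.filter fun i => P i = k).card = 1)
    (x : Fin n → ℝ) :
    ∑ e ∈ E, ∏ i ∈ e, x i =
      (∑ i ∈ univ.filter (fun i => P i = 0), x i) *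
        ((∑ i ∈ univ.filter (fun i => P i = 1), x i) *
          (∑ i ∈ univ.filter (fun i => P i = 2), x i)) := by
  classical
  have key : ∑ p ∈ ((univ.filter (fun i => P i = 0)) ×ˢ
        ((univ.filter (fun i => P i = 1)) ×ˢ (univ.filter (fun i => P i = 2)))),
      x p.1 * (x p.2.1 * x p.2.2) = ∑ e ∈ E, ∏ i ∈ e, x i := by
    refine Finset.sum_nbij (fun p => {p.1, p.2.1, p.2.2}) ?_ ?_ ?_ ?_
    · rintro ⟨i, j, k⟩ hp
      simp only [Finset.mem_product, Finset.mem_filter, Finset.mem_univ, true_and] at hp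
      exact triple_mem hpart hp.1 hp.2.1 hp.2.2
    · rintro ⟨i, j, k⟩ hp ⟨i', j', k'⟩ hp' heq
      simp only [Finset.coe_product, Set.mem_prod, Finset.mem_coe, Finset.mem_filter,
        Finset.mem_univ, true_and] at hp hp'
      obtain ⟨hi, hj, hk⟩ := hp
      obtain ⟨hi', hj', hk'⟩ := hp'
      have heq' : ({i, j, k} : Finset (Fin n)) = {i', j', k'} := heq
      have h1 : i = i' := by
        have : i ∈ ({i', j', k'} : Finset (Fin n)) := by rw [← heq']; simp
        simp only [Finset.mem_insert, Finset.mem_singleton] at this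
        rcases this with rfl | rfl | rfl <;> simp_all
      have h2 : j = j' := by
        have : j ∈ ({i', j', k'} : Finset (Fin n)) := by rw [← heq']; simp
        simp only [Finset.mem_insert, Finset.mem_singleton] at this
        rcases this with rfl | rfl | rfl <;> simp_all
      have h3 : k = k' := by
        have : k ∈ ({i', j', k'} : Finset (Fin n)) := by rw [← heq']; simp
        simp only [Finset.mem_insert, Finset.mem_singleton] at this
        rcases this with rfl | rfl | rfl <;> simp_all
      simp [h1, h2, h3]
    · intro e he
      simp only [Finset.mem_coe] at he
      obtain ⟨i, j, k, hi, hj, hk, rfl⟩ := edge_struct hpart he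
      refine ⟨(i, j, k), ?_, rfl⟩
      simp [hi, hj, hk]
    · rintro ⟨i, j, k⟩ hp
      simp only [Finset.mem_product, Finset.mem_filter, Finset.mem_univ, true_and] at hp
      obtain ⟨hi, hj, hk⟩ := hp
      have hij : i ≠ j := fun h => by rw [h, hj] at hi; exact absurd hi (by decide)
      have hik : i ≠ k := fun h => by rw [h, hk] at hi; exact absurd hi (by decide)
      have hjk : j ≠ k := fun h => by rw [h, hk] at hj; exact absurd hj (by decide)
      rw [Finset.prod_insert (by simp [hij, hik]), Finset.prod_pair hjk]
  rw [← key, Finset.sum_product]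
  simp_rw [Finset.sum_product]
  conv_rhs => rw [Finset.sum_mul_sum, Finset.sum_mul_sum]
  simp_rw [Finset.mul_sum]


lemma hoelder_abs {n : ℕ} {p : ℝ} (hp : 1 < p) (s : Finset (Fin n)) (x : Fin n → ℝ) :
    |∑ i ∈ s, x i| ≤ (s.card : ℝ) ^ (1 - 1/p) * (∑ i ∈ s, |x i| ^ p) ^ (1/p) := by
  have hp0 : (0:ℝ) < p := zero_lt_one.trans hp
  have hp1 : p - 1 ≠ 0 := sub_ne_zero.2 (ne_of_gt hp)
  have hq : Real.HolderConjugate p (p/(p-1)) := Real.HolderConjugate.conjExponent hp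
  have h := Real.inner_le_Lp_mul_Lq s (fun i => |x i|) (fun _ => 1) hq
  simp only [mul_one, abs_abs, abs_one, Real.one_rpow, Finset.sum_const, nsmul_eq_mul] at h
  have hqinv : 1/(p/(p-1)) = 1 - 1/p := by field_simp
  rw [hqinv] at h
  calc |∑ i ∈ s, x i| ≤ ∑ i ∈ s, |x i| := Finset.abs_sum_le_sum_abs _ _
    _ ≤ (∑ i ∈ s, |x i| ^ p) ^ (1/p) * ((s.card : ℝ) * 1) ^ (1 - 1/p) := by simpa using h
    _ = (s.card : ℝ) ^ (1 - 1/p) * (∑ i ∈ s, |x i| ^ p) ^ (1/p) := by rw [mul_one, mul_comm]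

/-- For `p > 1`, a complete 3-partite 3-graph `G` with three nonempty vertex classes
satisfies `λ^(p)(G) = (27 |E(G)|)^(1 - 1/p) / 9`. -/
theorem specRad_complete3Partite {n : ℕ} (p : ℝ) (hp : 1 < p)
    (E : Finset (Finset (Fin n))) (P : Fin n → Fin 3) (hsurj : ∀ k : Fin 3, ∃ i, P i = k)
    (hpart : ∀ e : Finset (Fin n),
      e ∈ E ↔ ∀ k : Fin 3, (e.filter fun i => P i = k).card = 1) :
    specRad p E = (27 * (E.card : ℝ)) ^ (1 - 1 / p) / 9 := by
  classical
  have hp0 : (0:ℝ) < p := zero_lt_one.trans hp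
  have hp0' : p ≠ 0 := ne_of_gt hp0
  set A : Fin 3 → Finset (Fin n) := fun k => univ.filter (fun i => P i = k) with hA
  have hApos : ∀ k, 0 < ((A k).card : ℝ) := by
    intro k
    obtain ⟨i, hi⟩ := hsurj k
    exact_mod_cast Finset.card_pos.2 ⟨i, by simp [hA, hi]⟩
  have hcard : (E.card : ℝ) =
      ((A 0).card : ℝ) * (((A 1).card : ℝ) * ((A 2).card : ℝ)) := by
    have h := sum_prod_eq hpart (fun _ => (1:ℝ))
    simp only [hA]
    simpa using h
  have hmpos : (0:ℝ) < (E.card : ℝ) := by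
    rw [hcard]; exact mul_pos (hApos 0) (mul_pos (hApos 1) (hApos 2))
  have h27m : (0:ℝ) < 27 * (E.card : ℝ) := by linarith
  set T : ℝ := (27 * (E.card : ℝ)) ^ (1 - 1/p) / 9 with hT
  have hTval : T = 3 * ((E.card : ℝ) ^ (1 - 1/p) * ((1:ℝ)/27) ^ (1/p)) := by
    have e1 : ((1:ℝ)/27) ^ (1/p) = 1 / (27:ℝ) ^ (1/p) := by
      rw [Real.div_rpow (by norm_num) (by norm_num), Real.one_rpow]
    have e2 : (27:ℝ) ^ (1 - 1/p) = 27 / (27:ℝ) ^ (1/p) := by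
      rw [Real.rpow_sub (by norm_num), Real.rpow_one]
    have e3 : (27 * (E.card : ℝ)) ^ (1 - 1/p)
        = (27:ℝ) ^ (1 - 1/p) * (E.card : ℝ) ^ (1 - 1/p) :=
      Real.mul_rpow (by norm_num) (le_of_lt hmpos)
    have h27p : (0:ℝ) < (27:ℝ) ^ (1/p) := Real.rpow_pos_of_pos (by norm_num) _
    rw [hT, e3, e2, e1]
    field_simp
    ring
  have hubx : ∀ x : Fin n → ℝ, pNorm p x = 1 → polyForm E x ≤ T := by
    intro x hxn
    have hsum1 : ∑ i, |x i| ^ p = 1 := by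
      have h0 : (0:ℝ) ≤ ∑ i, |x i| ^ p :=
        Finset.sum_nonneg fun i _ => Real.rpow_nonneg (abs_nonneg _) _
      have h1 : ((∑ i, |x i| ^ p) ^ (1/p)) ^ p = ∑ i, |x i| ^ p := by
        rw [one_div, Real.rpow_inv_rpow h0 hp0']
      have hxn' : (∑ i, |x i| ^ p) ^ (1/p) = 1 := hxn
      rw [← h1, hxn', Real.one_rpow]
    set t : Fin 3 → ℝ := fun k => ∑ i ∈ A k, |x i| ^ p with ht
    have htn : ∀ k, 0 ≤ t k := fun k =>
      Finset.sum_nonneg fun i _ => Real.rpow_nonneg (abs_nonneg _) _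
    have htsum : t 0 + t 1 + t 2 = 1 := by
      have h := Finset.sum_fiberwise (univ : Finset (Fin n)) P (fun i => |x i| ^ p)
      rw [Fin.sum_univ_three] at h
      rw [ht]
      simp only [hA]
      rw [h, hsum1]
    have hprod : t 0 * (t 1 * t 2) ≤ 1/27 := by
      nlinarith [sq_nonneg (t 0 - t 1), sq_nonneg (t 1 - t 2), sq_nonneg (t 0 - t 2),
        sq_nonneg (t 0 + t 1 - 2*t 2), sq_nonneg (t 1 + t 2 - 2*t 0),
        sq_nonneg (t 0 + t 2 - 2*t 1), mul_nonneg (htn 0) (htn 1),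
        mul_nonneg (htn 1) (htn 2), mul_nonneg (htn 0) (htn 2), htn 0, htn 1, htn 2, htsum]
    have hH : ∀ k, |∑ i ∈ A k, x i| ≤ ((A k).card : ℝ) ^ (1 - 1/p) * (t k) ^ (1/p) :=
      fun k => hoelder_abs hp (A k) x
    have hHn : ∀ k, (0:ℝ) ≤ ((A k).card : ℝ) ^ (1 - 1/p) * (t k) ^ (1/p) := fun k =>
      mul_nonneg (Real.rpow_nonneg (le_of_lt (hApos k)) _) (Real.rpow_nonneg (htn k) _)
    have hpoly : polyForm E x
        = 3 * ((∑ i ∈ A 0, x i) * ((∑ i ∈ A 1, x i) * (∑ i ∈ A 2, x i))) := by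
      simp only [polyForm, hA]
      rw [sum_prod_eq hpart]
    rw [hpoly]
    have step1 : (∑ i ∈ A 0, x i) * ((∑ i ∈ A 1, x i) * (∑ i ∈ A 2, x i))
        ≤ |∑ i ∈ A 0, x i| * (|∑ i ∈ A 1, x i| * |∑ i ∈ A 2, x i|) := by
      calc (∑ i ∈ A 0, x i) * ((∑ i ∈ A 1, x i) * (∑ i ∈ A 2, x i))
          ≤ |(∑ i ∈ A 0, x i) * ((∑ i ∈ A 1, x i) * (∑ i ∈ A 2, x i))| := le_abs_self _
        _ = _ := by rw [abs_mul, abs_mul]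
    have step2 : |∑ i ∈ A 0, x i| * (|∑ i ∈ A 1, x i| * |∑ i ∈ A 2, x i|)
        ≤ (((A 0).card : ℝ) ^ (1 - 1/p) * (t 0) ^ (1/p)) *
          ((((A 1).card : ℝ) ^ (1 - 1/p) * (t 1) ^ (1/p)) *
           (((A 2).card : ℝ) ^ (1 - 1/p) * (t 2) ^ (1/p))) := by
      have m1 := mul_le_mul (hH 1) (hH 2) (abs_nonneg _) (hHn 1)
      exact mul_le_mul (hH 0) m1 (mul_nonneg (abs_nonneg _) (abs_nonneg _)) (hHn 0)
    have step3 : (((A 0).card : ℝ) ^ (1 - 1/p) * (t 0) ^ (1/p)) *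
          ((((A 1).card : ℝ) ^ (1 - 1/p) * (t 1) ^ (1/p)) *
           (((A 2).card : ℝ) ^ (1 - 1/p) * (t 2) ^ (1/p)))
        = (E.card : ℝ) ^ (1 - 1/p) * (t 0 * (t 1 * t 2)) ^ (1/p) := by
      rw [hcard,
        Real.mul_rpow (le_of_lt (hApos 0)) (le_of_lt (mul_pos (hApos 1) (hApos 2))),
        Real.mul_rpow (le_of_lt (hApos 1)) (le_of_lt (hApos 2)),
        Real.mul_rpow (htn 0) (mul_nonneg (htn 1) (htn 2)),
        Real.mul_rpow (htn 1) (htn 2)]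
      ring
    have step4 : (t 0 * (t 1 * t 2)) ^ (1/p) ≤ ((1:ℝ)/27) ^ (1/p) :=
      Real.rpow_le_rpow (mul_nonneg (htn 0) (mul_nonneg (htn 1) (htn 2))) hprod
        (by positivity)
    calc 3 * ((∑ i ∈ A 0, x i) * ((∑ i ∈ A 1, x i) * (∑ i ∈ A 2, x i)))
        ≤ 3 * ((E.card : ℝ) ^ (1 - 1/p) * (t 0 * (t 1 * t 2)) ^ (1/p)) :=
          mul_le_mul_of_nonneg_left (step1.trans (step2.trans_eq step3)) (by norm_num)
      _ ≤ 3 * ((E.card : ℝ) ^ (1 - 1/p) * ((1:ℝ)/27) ^ (1/p)) :=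
          mul_le_mul_of_nonneg_left
            (mul_le_mul_of_nonneg_left step4 (Real.rpow_nonneg (le_of_lt hmpos) _))
            (by norm_num)
      _ = T := hTval.symm
  have hb : ∀ k : Fin 3, (0:ℝ) < 3 * ((A k).card : ℝ) := fun k => by
    have := hApos k; linarith
  have hmem : ∃ x : Fin n → ℝ, pNorm p x = 1 ∧ polyForm E x = T := by
    refine ⟨fun i => (3 * ((A (P i)).card : ℝ)) ^ (-(1/p)), ?_, ?_⟩
    · have habs : ∀ i : Fin n, |(3 * ((A (P i)).card : ℝ)) ^ (-(1/p))| ^ p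
          = (3 * ((A (P i)).card : ℝ))⁻¹ := by
        intro i
        rw [abs_of_pos (Real.rpow_pos_of_pos (hb (P i)) _),
          ← Real.rpow_mul (le_of_lt (hb (P i)))]
        have he : -(1/p) * p = -1 := by field_simp
        rw [he, Real.rpow_neg_one]
      have hsum : (∑ i, |(3 * ((A (P i)).card : ℝ)) ^ (-(1/p))| ^ p) = 1 := by
        calc (∑ i, |(3 * ((A (P i)).card : ℝ)) ^ (-(1/p))| ^ p)
            = ∑ i, (3 * ((A (P i)).card : ℝ))⁻¹ :=
              Finset.sum_congr rfl fun i _ => habs i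
          _ = ∑ k : Fin 3, ∑ i ∈ univ.filter (fun i => P i = k),
                (3 * ((A (P i)).card : ℝ))⁻¹ :=
              (Finset.sum_fiberwise univ P _).symm
          _ = ∑ k : Fin 3, ((A k).card : ℝ) * (3 * ((A k).card : ℝ))⁻¹ := by
              refine Finset.sum_congr rfl fun k _ => ?_
              have hc : ∀ i ∈ univ.filter (fun i => P i = k),
                  (3 * ((A (P i)).card : ℝ))⁻¹ = (3 * ((A k).card : ℝ))⁻¹ := by
                intro i hi
                rw [(Finset.mem_filter.1 hi).2]
              rw [Finset.sum_congr rfl hc, Finset.sum_const, nsmul_eq_mul]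
          _ = ∑ _k : Fin 3, (1/3 : ℝ) := by
              refine Finset.sum_congr rfl fun k _ => ?_
              have h := hApos k
              field_simp
          _ = 1 := by rw [Fin.sum_univ_three]; norm_num
      simp only [pNorm]
      rw [hsum, Real.one_rpow]
    · have hSk : ∀ k : Fin 3, (∑ i ∈ univ.filter (fun i => P i = k),
          (3 * ((A (P i)).card : ℝ)) ^ (-(1/p)))
          = ((A k).card : ℝ) * (3 * ((A k).card : ℝ)) ^ (-(1/p)) := by
        intro k
        have hc : ∀ i ∈ univ.filter (fun i => P i = k),
            (3 * ((A (P i)).card : ℝ)) ^ (-(1/p)) = (3 * ((A k).card : ℝ)) ^ (-(1/p)) := by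
          intro i hi
          rw [(Finset.mem_filter.1 hi).2]
        rw [Finset.sum_congr rfl hc, Finset.sum_const, nsmul_eq_mul]
      simp only [polyForm]
      rw [sum_prod_eq hpart, hSk 0, hSk 1, hSk 2]
      have hmul : (3 * ((A 0).card : ℝ)) ^ (-(1/p)) *
            ((3 * ((A 1).card : ℝ)) ^ (-(1/p)) * (3 * ((A 2).card : ℝ)) ^ (-(1/p)))
          = (27 * (E.card : ℝ)) ^ (-(1/p)) := by
        rw [← Real.mul_rpow (le_of_lt (hb 1)) (le_of_lt (hb 2)),
          ← Real.mul_rpow (le_of_lt (hb 0)) (le_of_lt (mul_pos (hb 1) (hb 2)))]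
        congr 1
        rw [hcard]; ring
      have hneg : (27 * (E.card : ℝ)) ^ (-(1/p)) = ((27 * (E.card : ℝ)) ^ (1/p))⁻¹ :=
        Real.rpow_neg (le_of_lt h27m) _
      have hppos : (0:ℝ) < (27 * (E.card : ℝ)) ^ (1/p) := Real.rpow_pos_of_pos h27m _
      have hkey : 3 * ((((A 0).card : ℝ) * (3 * ((A 0).card : ℝ)) ^ (-(1/p))) *
            ((((A 1).card : ℝ) * (3 * ((A 1).card : ℝ)) ^ (-(1/p))) *
             (((A 2).card : ℝ) * (3 * ((A 2).card : ℝ)) ^ (-(1/p)))))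
          = 3 * ((E.card : ℝ) * ((27 * (E.card : ℝ)) ^ (1/p))⁻¹) := by
        rw [← hneg, ← hmul, hcard]; ring
      rw [hkey, hT, Real.rpow_sub h27m, Real.rpow_one]
      field_simp
      ring
  obtain ⟨x₀, hx₀n, hx₀v⟩ := hmem
  have hTmem : T ∈ {r : ℝ | ∃ x : Fin n → ℝ, pNorm p x = 1 ∧ polyForm E x = r} :=
    ⟨x₀, hx₀n, hx₀v⟩
  have hub : ∀ r ∈ {r : ℝ | ∃ x : Fin n → ℝ, pNorm p x = 1 ∧ polyForm E x = r}, r ≤ T := by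
    rintro r ⟨x, hxn, rfl⟩
    exact hubx x hxn
  rw [show specRad p E = sSup {r : ℝ | ∃ x : Fin n → ℝ, pNorm p x = 1 ∧ polyForm E x = r}
    from rfl]
  exact le_antisymm (csSup_le ⟨T, hTmem⟩ hub) (le_csSup ⟨T, hub⟩ hTmem)
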